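/- Suppose that for every i the matrix M_i := [[q_i Q, −C],[−Cᵀ, q_i Q]] ∈ ℝ^{2n×2n} is symmetric positive semidefinite, and that the spectral norm of P satisfies ‖P‖₂ ≤ 1. Fix λ ∈ (0,1). Then for any initial vector z_0 ∈ ℝ^{Nn} the Krasnoselskij iteration z_{k+1} := (1−λ) z_k + λ A_ν(z_k) converges as k → ∞ to a fixed point of A_ν. (Theorem 3, statement 2.) -/

import Mathlib

open Matrix Filter Topology Finset
open scoped Kronecker

noncomputable section

/-- Euclidean norm of a finitely-indexed real vector. -/
def eunorm {ι : Type*} [Fintype ι] (x : ι → ℝ) : ℝ := Real.sqrt (x ⬝ᵥ x)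

/-- `S`-weighted norm `‖x‖_S = √(xᵀ S x)`. -/
def wnorm {ι : Type*} [Fintype ι] (S : Matrix ι ι ℝ) (x : ι → ℝ) : ℝ :=
  Real.sqrt (x ⬝ᵥ S.mulVec x)

/-- Quadratic cost `J(x,z) = q·xᵀQx + 2(Cz+c)ᵀx`. -/
def cost {n : ℕ} (Q C : Matrix (Fin n) (Fin n) ℝ) (qi : ℝ) (ci : Fin n → ℝ)
    (x z : Fin n → ℝ) : ℝ :=
  qi * (x ⬝ᵥ Q.mulVec x) + 2 * ((C.mulVec z + ci) ⬝ᵥ x)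

/-- `xst` is the optimal-response map: for every `z`, `xst z` minimizes the cost over `X`. -/
def IsOptResp {n : ℕ} (X : Set (Fin n → ℝ)) (Q C : Matrix (Fin n) (Fin n) ℝ)
    (qi : ℝ) (ci : Fin n → ℝ) (xst : (Fin n → ℝ) → (Fin n → ℝ)) : Prop :=
  ∀ z, xst z ∈ X ∧ ∀ y ∈ X, cost Q C qi ci (xst z) z ≤ cost Q C qi ci y z

/-- Stacked optimal responses `x⋆(z) = (x^{1⋆}(z^1);…;x^{N⋆}(z^N))`. -/
def extMap {n N : ℕ} (xstar : Fin N → (Fin n → ℝ) → (Fin n → ℝ))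
    (z : Fin N × Fin n → ℝ) : Fin N × Fin n → ℝ :=
  fun p => xstar p.1 (fun j => z (p.1, j)) p.2

/-- Extended aggregation map `A_ν(z) = (P^ν ⊗ I_n) x⋆(z)`. -/
def aggMap {n N : ℕ} (P : Matrix (Fin N) (Fin N) ℝ) (ν : ℕ)
    (xstar : Fin N → (Fin n → ℝ) → (Fin n → ℝ)) (z : Fin N × Fin n → ℝ) :
    Fin N × Fin n → ℝ :=
  ((P ^ ν) ⊗ₖ (1 : Matrix (Fin n) (Fin n) ℝ)).mulVec (extMap xstar z)

/-- The matrix `(1/N)·1_N 1_Nᵀ` with all entries `1/N`. -/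
def avgMat (N : ℕ) : Matrix (Fin N) (Fin N) ℝ := Matrix.of fun _ _ => (N : ℝ)⁻¹

/-- Mean-field aggregation map `A(z) = ((1/N)·1 1ᵀ ⊗ I_n) x⋆(z)`. -/
def meanAgg {n N : ℕ} (xstar : Fin N → (Fin n → ℝ) → (Fin n → ℝ))
    (z : Fin N × Fin n → ℝ) : Fin N × Fin n → ℝ :=
  ((avgMat N) ⊗ₖ (1 : Matrix (Fin n) (Fin n) ℝ)).mulVec (extMap xstar z)

/-- Maximum-row-sum matrix norm `‖A‖_∞`. -/
def rowSumNorm {N : ℕ} (A : Matrix (Fin N) (Fin N) ℝ) : ℝ := ⨆ i, ∑ j, |A i j|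

/-- Spectral norm (ℓ²-operator norm) of a real matrix. -/
def specNorm {ι : Type*} [Fintype ι] [DecidableEq ι] (P : Matrix ι ι ℝ) : ℝ :=
  ‖LinearMap.toContinuousLinearMap (Matrix.toEuclideanLin P)‖

/-- Map `A_{m,m}(z) = (P^m ⊗ I_n) x⋆((P^m ⊗ I_n) z)`. -/
def halfAgg {n N : ℕ} (P : Matrix (Fin N) (Fin N) ℝ) (m : ℕ)
    (xstar : Fin N → (Fin n → ℝ) → (Fin n → ℝ)) (z : Fin N × Fin n → ℝ) :
    Fin N × Fin n → ℝ :=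
  ((P ^ m) ⊗ₖ (1 : Matrix (Fin n) (Fin n) ℝ)).mulVec
    (extMap xstar (((P ^ m) ⊗ₖ (1 : Matrix (Fin n) (Fin n) ℝ)).mulVec z))

set_option linter.unusedSectionVars false

section KMAux


variable {E : Type*} [NormedAddCommGroup E] [InnerProductSpace ℝ E] [FiniteDimensional ℝ E]

lemma comb_norm_sq (t : ℝ) (a b : E) :
    ‖(1-t)•a + t•b‖^2 = (1-t)*‖a‖^2 + t*‖b‖^2 - t*(1-t)*‖a-b‖^2 := by
  have e : ∀ x : E, ‖x‖^2 = inner ℝ x x := fun x => (real_inner_self_eq_norm_sq x).symm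
  rw [e, e, e, e]
  simp only [inner_add_left, inner_add_right, inner_sub_left, inner_sub_right,
    real_inner_smul_left, real_inner_smul_right]
  rw [real_inner_comm b a]
  ring


lemma nonexp_exists_fixedPoint' (T : E → E) (hT : ∀ a b, ‖T a - T b‖ ≤ ‖a - b‖)
    (Cb : ℝ) (hC : ∀ z, ‖T z‖ ≤ Cb) : ∃ p, T p = p := by
  have hTlip : LipschitzWith 1 T := by
    apply LipschitzWith.of_dist_le_mul
    intro a b
    simpa [dist_eq_norm] using hT a b
  have hTc : Continuous T := hTlip.continuous
  have hCb : 0 ≤ Cb := le_trans (norm_nonneg _) (hC 0)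
  have key : ∀ m : ℕ, ∃ x : E, x = (1 - 1/(m+1) : ℝ) • T x := by
    intro m
    set ε : ℝ := 1/(m+1) with hε
    have hε0 : 0 < ε := by positivity
    have hε1 : ε ≤ 1 := by
      rw [hε, div_le_one (by positivity)]
      norm_num
    have h1ε : (0:ℝ) ≤ 1 - ε := by linarith
    set K : NNReal := ⟨1 - ε, h1ε⟩ with hK
    have hlip : LipschitzWith K (fun z => (1-ε) • T z) := by
      apply LipschitzWith.of_dist_le_mul
      intro a b
      simp only [dist_eq_norm, ← smul_sub]
      rw [norm_smul, Real.norm_eq_abs, abs_of_nonneg h1ε]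
      exact mul_le_mul_of_nonneg_left (hT a b) h1ε
    have hcontr : ContractingWith K (fun z => (1-ε) • T z) := by
      constructor
      · rw [← NNReal.coe_lt_coe]
        show (1:ℝ) - ε < 1
        linarith
      · exact hlip
    obtain ⟨y, hy, -⟩ := hcontr.exists_fixedPoint 0 (edist_ne_top _ _)
    exact ⟨y, hy.symm⟩
  choose x hx using key
  have hnorm1 : ∀ m : ℕ, ‖(1 - 1/((m:ℝ)+1))‖ ≤ 1 := by
    intro m
    have h1 : (0:ℝ) < 1/((m:ℝ)+1) := by positivity
    have h2 : 1/((m:ℝ)+1) ≤ 1 := by rw [div_le_one (by positivity)]; norm_num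
    rw [Real.norm_eq_abs, abs_of_nonneg (by linarith)]
    linarith
  have hxb : ∀ m, ‖x m‖ ≤ Cb := by
    intro m
    rw [hx m, norm_smul]
    calc ‖(1 - 1/((m:ℝ)+1))‖ * ‖T (x m)‖ ≤ 1 * Cb :=
          mul_le_mul (hnorm1 m) (hC _) (norm_nonneg _) zero_le_one
      _ = Cb := one_mul _
  have hxd : ∀ m, ‖x m - T (x m)‖ ≤ Cb / (m+1) := by
    intro m
    have e : x m - T (x m) = (-(1/((m:ℝ)+1))) • T (x m) := by
      nth_rewrite 1 [hx m]
      rw [sub_smul, one_smul, neg_smul]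
      abel
    rw [e, norm_smul, Real.norm_eq_abs, abs_neg,
      abs_of_nonneg (by positivity : (0:ℝ) ≤ 1/((m:ℝ)+1))]
    calc (1/((m:ℝ)+1)) * ‖T (x m)‖ ≤ (1/((m:ℝ)+1)) * Cb :=
          mul_le_mul_of_nonneg_left (hC _) (by positivity)
      _ = Cb/((m:ℝ)+1) := by ring
  -- Bolzano-Weierstrass
  have hmem : ∀ m, x m ∈ Metric.closedBall (0:E) Cb := by
    intro m; simpa [Metric.mem_closedBall, dist_eq_norm] using hxb m
  obtain ⟨p, -, φ, hφ, hlim⟩ := tendsto_subseq_of_bounded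
    (Metric.isBounded_closedBall (x := (0:E)) (r := Cb)) hmem
  refine ⟨p, ?_⟩
  have hg : Continuous fun z : E => ‖z - T z‖ := (continuous_id.sub hTc).norm
  have h1 : Filter.Tendsto (fun j => ‖x (φ j) - T (x (φ j))‖) atTop (𝓝 ‖p - T p‖) :=
    (hg.tendsto p).comp hlim
  have h2 : Filter.Tendsto (fun j => ‖x (φ j) - T (x (φ j))‖) atTop (𝓝 0) := by
    apply squeeze_zero (fun j => norm_nonneg _) (fun j => hxd (φ j))
    have : Filter.Tendsto (fun j : ℕ => Cb / ((j:ℝ)+1)) atTop (𝓝 0) := by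
      apply Filter.Tendsto.div_atTop tendsto_const_nhds
      exact Filter.tendsto_atTop_add_const_right _ _ tendsto_natCast_atTop_atTop
    exact this.comp hφ.tendsto_atTop
  have := tendsto_nhds_unique h1 h2
  have : p - T p = 0 := by rwa [← norm_eq_zero]
  exact (sub_eq_zero.mp this).symm

lemma km_main (T : E → E) (hT : ∀ a b, ‖T a - T b‖ ≤ ‖a - b‖)
    (Cb : ℝ) (hC : ∀ z, ‖T z‖ ≤ Cb) (lam : ℝ) (h0 : 0 < lam) (h1 : lam < 1) (z0 : E) :
    ∃ zbar, T zbar = zbar ∧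
      Tendsto (fun k => (fun z => (1 - lam) • z + lam • T z)^[k] z0) atTop (𝓝 zbar) := by
  have hTc : Continuous T := by
    have : LipschitzWith 1 T := LipschitzWith.of_dist_le_mul (by
      intro a b; simpa [dist_eq_norm] using hT a b)
    exact this.continuous
  set S : E → E := fun z => (1 - lam) • z + lam • T z with hS
  set zk : ℕ → E := fun k => S^[k] z0 with hzk
  have hiter : ∀ k, zk (k+1) = S (zk k) := fun k => Function.iterate_succ_apply' S k z0
  -- key Fejér inequality
  have key : ∀ (p : E), T p = p → ∀ z : E,
      ‖S z - p‖^2 ≤ ‖z - p‖^2 - lam*(1-lam)*‖z - T z‖^2 := by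
    intro p hp z
    have h1' : S z - p = (1-lam)•(z-p) + lam•(T z - p) := by
      simp only [hS, smul_sub, sub_smul, one_smul]
      abel
    have h2 : ‖T z - p‖ ≤ ‖z - p‖ := by
      conv_lhs => rw [← hp]
      exact hT z p
    have h3 : (z - p) - (T z - p) = z - T z := by abel
    rw [h1', comb_norm_sq, h3]
    have h2sq : ‖T z - p‖^2 ≤ ‖z - p‖^2 := by nlinarith [norm_nonneg (T z - p)]
    nlinarith [mul_le_mul_of_nonneg_left h2sq h0.le]
  obtain ⟨p, hp⟩ := nonexp_exists_fixedPoint' T hT Cb hC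
  set a : ℕ → ℝ := fun k => ‖zk k - p‖^2 with ha
  have hastep : ∀ k, a (k+1) ≤ a k - lam*(1-lam)*‖zk k - T (zk k)‖^2 := by
    intro k
    have := key p hp (zk k)
    rw [← hiter k] at this
    exact this
  have haanti : ∀ k, a (k+1) ≤ a k := by
    intro k
    have := hastep k
    nlinarith [sq_nonneg ‖zk k - T (zk k)‖, mul_pos h0 (by linarith : (0:ℝ) < 1 - lam),
      mul_nonneg (mul_pos h0 (by linarith : (0:ℝ) < 1 - lam)).le (sq_nonneg ‖zk k - T (zk k)‖)]
  have haANT : Antitone a := antitone_nat_of_succ_le haanti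
  have habdd : BddBelow (Set.range a) := ⟨0, by rintro _ ⟨k, rfl⟩; positivity⟩
  have haconv : Tendsto a atTop (𝓝 (⨅ k, a k)) := tendsto_atTop_ciInf haANT habdd
  -- residual tends to zero
  have hd2 : Tendsto (fun k => ‖zk k - T (zk k)‖^2) atTop (𝓝 0) := by
    have hdiff : Tendsto (fun k => a k - a (k+1)) atTop (𝓝 0) := by
      have h2 : Tendsto (fun k => a (k+1)) atTop (𝓝 (⨅ k, a k)) :=
        haconv.comp (tendsto_add_atTop_nat 1)
      simpa using haconv.sub h2
    have hposc : (0:ℝ) < lam * (1-lam) := mul_pos h0 (by linarith)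
    have hb : ∀ k, ‖zk k - T (zk k)‖^2 ≤ (a k - a (k+1)) / (lam*(1-lam)) := by
      intro k
      rw [le_div_iff₀ hposc]
      have := hastep k
      nlinarith
    apply squeeze_zero (fun k => sq_nonneg _) hb
    simpa using hdiff.div_const (lam*(1-lam))
  have hd : Tendsto (fun k => ‖zk k - T (zk k)‖) atTop (𝓝 0) := by
    have h := (Real.continuous_sqrt.tendsto 0).comp hd2
    rw [Real.sqrt_zero] at h
    have e : (Real.sqrt ∘ fun k => ‖zk k - T (zk k)‖ ^ 2)
        = fun k => ‖zk k - T (zk k)‖ := funext fun k => Real.sqrt_sq (norm_nonneg _)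
    rwa [e] at h
  -- boundedness and subsequence
  have hbd : ∀ k, zk k ∈ Metric.closedBall p ‖z0 - p‖ := by
    intro k
    have h1' : a k ≤ a 0 := haANT (Nat.zero_le k)
    have : ‖zk k - p‖ ≤ ‖z0 - p‖ := by
      have h0' : zk 0 = z0 := rfl
      rw [ha] at h1'
      simp only [h0'] at h1'
      nlinarith [norm_nonneg (zk k - p), norm_nonneg (z0 - p)]
    simpa [Metric.mem_closedBall, dist_eq_norm] using this
  obtain ⟨zbar, -, φ, hφ, hlim⟩ := tendsto_subseq_of_bounded
    (Metric.isBounded_closedBall (x := p) (r := ‖z0 - p‖)) hbd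
  have hfix : T zbar = zbar := by
    have hg : Continuous fun z : E => ‖z - T z‖ := (continuous_id.sub hTc).norm
    have h1' : Tendsto (fun j => ‖zk (φ j) - T (zk (φ j))‖) atTop (𝓝 ‖zbar - T zbar‖) :=
      (hg.tendsto zbar).comp hlim
    have h2' : Tendsto (fun j => ‖zk (φ j) - T (zk (φ j))‖) atTop (𝓝 0) :=
      hd.comp hφ.tendsto_atTop
    have := tendsto_nhds_unique h1' h2'
    have : zbar - T zbar = 0 := by rwa [← norm_eq_zero]
    exact (sub_eq_zero.mp this).symm
  refine ⟨zbar, hfix, ?_⟩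
  -- Fejér monotone wrt zbar, subsequence converges → whole sequence converges
  set b : ℕ → ℝ := fun k => ‖zk k - zbar‖^2 with hb
  have hbanti : Antitone b := by
    apply antitone_nat_of_succ_le
    intro k
    have := key zbar hfix (zk k)
    rw [← hiter k] at this
    show ‖zk (k+1) - zbar‖^2 ≤ ‖zk k - zbar‖^2
    nlinarith [sq_nonneg ‖zk k - T (zk k)‖,
      mul_nonneg (mul_pos h0 (by linarith : (0:ℝ) < 1 - lam)).le (sq_nonneg ‖zk k - T (zk k)‖)]
  have hbbdd : BddBelow (Set.range b) := ⟨0, by rintro _ ⟨k, rfl⟩; positivity⟩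
  have hbconv : Tendsto b atTop (𝓝 (⨅ k, b k)) := tendsto_atTop_ciInf hbanti hbbdd
  have hbsub0 : Tendsto (fun j => b (φ j)) atTop (𝓝 0) := by
    have hg : Continuous fun z : E => ‖z - zbar‖^2 := ((continuous_id.sub continuous_const).norm).pow 2
    have := (hg.tendsto zbar).comp hlim
    rw [show ‖zbar - zbar‖^2 = 0 by simp] at this
    exact this
  have hbsub : Tendsto (fun j => b (φ j)) atTop (𝓝 (⨅ k, b k)) :=
    hbconv.comp hφ.tendsto_atTop
  have hinf0 : (⨅ k, b k) = 0 := tendsto_nhds_unique hbsub hbsub0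
  have hb0 : Tendsto b atTop (𝓝 0) := hinf0 ▸ hbconv
  have hnormto0 : Tendsto (fun k => ‖zk k - zbar‖) atTop (𝓝 0) := by
    have h := (Real.continuous_sqrt.tendsto 0).comp hb0
    rw [Real.sqrt_zero] at h
    have e : (Real.sqrt ∘ b) = fun k => ‖zk k - zbar‖ :=
      funext fun k => Real.sqrt_sq (norm_nonneg _)
    rwa [e] at h
  rw [tendsto_iff_norm_sub_tendsto_zero]
  exact hnormto0
end KMAux


-- variational inequality
lemma opt_vi {n : ℕ} {X : Set (Fin n → ℝ)} (hXconv : Convex ℝ X)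
    {Q C : Matrix (Fin n) (Fin n) ℝ} {qi : ℝ} {ci : Fin n → ℝ}
    {xst : (Fin n → ℝ) → (Fin n → ℝ)}
    (hQ : Q.PosSemidef) (hq : 0 < qi) (h : IsOptResp X Q C qi ci xst)
    (z y : Fin n → ℝ) (hy : y ∈ X) :
    0 ≤ qi * (xst z ⬝ᵥ Q.mulVec (y - xst z) + (y - xst z) ⬝ᵥ Q.mulVec (xst z))
      + 2 * ((C.mulVec z + ci) ⬝ᵥ (y - xst z)) := by
  set x := xst z with hxdef
  set u : Fin n → ℝ := y - x with hu
  set a : ℝ := qi * (u ⬝ᵥ Q.mulVec u) with hadef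
  set b : ℝ := qi * (x ⬝ᵥ Q.mulVec u + u ⬝ᵥ Q.mulVec x) + 2 * ((C.mulVec z + ci) ⬝ᵥ u) with hbdef
  have ha : 0 ≤ a := by
    have := hQ.dotProduct_mulVec_nonneg u
    simp only [star_trivial] at this
    exact mul_nonneg hq.le this
  have key : ∀ t : ℝ, 0 < t → t ≤ 1 → 0 ≤ b + t * a := by
    intro t ht0 ht1
    have hmem : x + t • u ∈ X := by
      have h2 : (1 - t) • x + t • y ∈ X :=
        hXconv (h z).1 hy (by linarith) ht0.le (by ring)
      have : x + t • u = (1 - t) • x + t • y := by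
        rw [hu, smul_sub, sub_smul, one_smul]
        abel
      rwa [this]
    have hle := (h z).2 _ hmem
    have expand : cost Q C qi ci (x + t • u) z
        = cost Q C qi ci x z + t * b + t^2 * a := by
      simp only [cost, hbdef, hadef, mulVec_add, mulVec_smul, dotProduct_add,
        add_dotProduct, dotProduct_smul, smul_dotProduct, smul_eq_mul]
      ring
    rw [expand] at hle
    nlinarith
  by_contra hb
  push_neg at hb
  set t : ℝ := min 1 (-b/(2*a+1)) with htdef
  have h2a : (0:ℝ) < 2*a+1 := by linarith
  have ht0 : 0 < t := lt_min one_pos (div_pos (by linarith) h2a)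
  have ht1 : t ≤ 1 := min_le_left _ _
  have ht2 : t * (2*a+1) ≤ -b := by
    have := min_le_right (1:ℝ) (-b/(2*a+1))
    calc t * (2*a+1) ≤ (-b/(2*a+1)) * (2*a+1) :=
          mul_le_mul_of_nonneg_right this h2a.le
      _ = -b := by field_simp
  have := key t ht0 ht1
  nlinarith

-- nonexpansiveness in the Q-weighted norm
lemma xstar_Q_nonexp {n : ℕ} {X : Set (Fin n → ℝ)} (hXconv : Convex ℝ X)
    {Q C : Matrix (Fin n) (Fin n) ℝ} {qi : ℝ} {ci : Fin n → ℝ}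
    {xst : (Fin n → ℝ) → (Fin n → ℝ)}
    (hQ : Q.PosSemidef) (hq : 0 < qi) (h : IsOptResp X Q C qi ci xst)
    (hM : (Matrix.fromBlocks (qi • Q) (-C) (-Cᵀ) (qi • Q)).PosSemidef)
    (z1 z2 : Fin n → ℝ) :
    (xst z1 - xst z2) ⬝ᵥ Q.mulVec (xst z1 - xst z2) ≤ (z1 - z2) ⬝ᵥ Q.mulVec (z1 - z2) := by
  have e1 := opt_vi hXconv hQ hq h z1 (xst z2) (h z2).1
  have e2 := opt_vi hXconv hQ hq h z2 (xst z1) (h z1).1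
  have hpsd := hM.dotProduct_mulVec_nonneg (Sum.elim (xst z1 - xst z2) (-(z1 - z2)))
  rw [fromBlocks_mulVec] at hpsd
  have htr1 : ∀ (a b : Fin n → ℝ), a ⬝ᵥ Cᵀ.mulVec b = b ⬝ᵥ C.mulVec a := fun a b => by
    rw [dotProduct_mulVec, vecMul_transpose, dotProduct_comm]
  have hc : ∀ (a b : Fin n → ℝ), C.mulVec a ⬝ᵥ b = b ⬝ᵥ C.mulVec a := fun a b =>
    dotProduct_comm _ _
  simp only [star_trivial, hc, Sum.elim_comp_inl, Sum.elim_comp_inr,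
    sumElim_dotProduct_sumElim, mulVec_add, mulVec_sub, mulVec_neg, neg_mulVec,
    dotProduct_add, dotProduct_sub, dotProduct_neg, neg_dotProduct, add_dotProduct,
    sub_dotProduct, smul_mulVec, dotProduct_smul, smul_eq_mul, htr1,
    neg_neg] at e1 e2 hpsd ⊢
  nlinarith [hpsd, e1, e2, hq]


lemma enormsq {ι : Type*} [Fintype ι] (x : ι → ℝ) :
    ‖((WithLp.equiv 2 (ι → ℝ)).symm x)‖^2 = x ⬝ᵥ x := by
  rw [EuclideanSpace.norm_eq]
  rw [Real.sq_sqrt (by positivity)]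
  simp [dotProduct, sq]

lemma specNorm_mulVec_le {ι : Type*} [Fintype ι] [DecidableEq ι]
    (A : Matrix ι ι ℝ) (hA : specNorm A ≤ 1) (x : ι → ℝ) :
    (A.mulVec x) ⬝ᵥ (A.mulVec x) ≤ x ⬝ᵥ x := by
  set y : EuclideanSpace ℝ ι := (WithLp.equiv 2 (ι → ℝ)).symm x with hy
  have h1 : ‖LinearMap.toContinuousLinearMap (Matrix.toEuclideanLin A) y‖
      ≤ specNorm A * ‖y‖ := (LinearMap.toContinuousLinearMap (Matrix.toEuclideanLin A)).le_opNorm y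
  have h2 : (LinearMap.toContinuousLinearMap (Matrix.toEuclideanLin A)) y
      = (WithLp.equiv 2 (ι → ℝ)).symm (A.mulVec x) := by
    rw [LinearMap.coe_toContinuousLinearMap']
    rfl
  rw [h2] at h1
  have h3 : ‖(WithLp.equiv 2 (ι → ℝ)).symm (A.mulVec x)‖ ≤ ‖y‖ := by
    calc ‖(WithLp.equiv 2 (ι → ℝ)).symm (A.mulVec x)‖ ≤ specNorm A * ‖y‖ := h1
      _ ≤ 1 * ‖y‖ := mul_le_mul_of_nonneg_right hA (norm_nonneg _)
      _ = ‖y‖ := one_mul _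
  have := mul_self_le_mul_self (norm_nonneg _) h3
  rw [← sq, ← sq] at this
  rwa [enormsq, hy, enormsq] at this

lemma specNorm_pow_mulVec_le {ι : Type*} [Fintype ι] [DecidableEq ι]
    (A : Matrix ι ι ℝ) (hA : specNorm A ≤ 1) (k : ℕ) (x : ι → ℝ) :
    ((A^k).mulVec x) ⬝ᵥ ((A^k).mulVec x) ≤ x ⬝ᵥ x := by
  induction k generalizing x with
  | zero => simp [Matrix.one_mulVec]
  | succ m ih =>
    rw [pow_succ, ← Matrix.mulVec_mulVec]
    exact le_trans (ih (A.mulVec x)) (specNorm_mulVec_le A hA x)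

lemma kron_one_mulVec_apply {N n : ℕ} (A : Matrix (Fin N) (Fin N) ℝ)
    (y : Fin N × Fin n → ℝ) (p : Fin N × Fin n) :
    ((A ⊗ₖ (1 : Matrix (Fin n) (Fin n) ℝ)).mulVec y) p
      = (A.mulVec fun k => y (k, p.2)) p.1 := by
  simp only [mulVec, dotProduct, Fintype.sum_prod_type, kroneckerMap_apply,
    Matrix.one_apply, mul_ite, mul_one, mul_zero, ite_mul, zero_mul]
  simp [Finset.sum_ite_eq]

lemma one_kron_mulVec_apply {N n : ℕ} (R : Matrix (Fin n) (Fin n) ℝ)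
    (y : Fin N × Fin n → ℝ) (p : Fin N × Fin n) :
    (((1 : Matrix (Fin N) (Fin N) ℝ) ⊗ₖ R).mulVec y) p
      = (R.mulVec fun l => y (p.1, l)) p.2 := by
  simp only [mulVec, dotProduct, Fintype.sum_prod_type, kroneckerMap_apply,
    Matrix.one_apply, mul_ite, mul_one, mul_zero, ite_mul, zero_mul, one_mul]
  simp [Finset.sum_ite_eq]

lemma dot_prod_split {N n : ℕ} (w : Fin N × Fin n → ℝ) :
    w ⬝ᵥ w = ∑ i : Fin N, (fun j => w (i,j)) ⬝ᵥ (fun j => w (i,j)) := by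
  simp [dotProduct, Fintype.sum_prod_type]

lemma kron_one_nonexp {N n : ℕ} (A : Matrix (Fin N) (Fin N) ℝ)
    (h : ∀ x : Fin N → ℝ, (A.mulVec x) ⬝ᵥ (A.mulVec x) ≤ x ⬝ᵥ x)
    (y : Fin N × Fin n → ℝ) :
    ((A ⊗ₖ (1 : Matrix (Fin n) (Fin n) ℝ)).mulVec y)
      ⬝ᵥ ((A ⊗ₖ (1 : Matrix (Fin n) (Fin n) ℝ)).mulVec y) ≤ y ⬝ᵥ y := by
  have lhs : ((A ⊗ₖ (1 : Matrix (Fin n) (Fin n) ℝ)).mulVec y)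
      ⬝ᵥ ((A ⊗ₖ (1 : Matrix (Fin n) (Fin n) ℝ)).mulVec y)
      = ∑ j : Fin n, (A.mulVec fun k => y (k,j)) ⬝ᵥ (A.mulVec fun k => y (k,j)) := by
    simp only [dotProduct, Fintype.sum_prod_type, kron_one_mulVec_apply]
    rw [Finset.sum_comm]
  have rhs : y ⬝ᵥ y = ∑ j : Fin n, (fun k => y (k,j)) ⬝ᵥ (fun k => y (k,j)) := by
    simp only [dotProduct, Fintype.sum_prod_type]
    rw [Finset.sum_comm]
  rw [lhs, rhs]
  exact Finset.sum_le_sum fun j _ => h _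

/-- Theorem 3, case 2: if each `M_i ⪰ 0` and `‖P‖₂ ≤ 1`, then the
Krasnoselskij iteration converges to a fixed point of `A_ν` from any start. -/
theorem krasnoselskij_converges {n N ν : ℕ} (hn : 0 < n) (hN : 0 < N) (hν : 0 < ν)
    (X : Fin N → Set (Fin n → ℝ))
    (hXne : ∀ i, (X i).Nonempty) (hXconv : ∀ i, Convex ℝ (X i))
    (hXcpt : ∀ i, IsCompact (X i))
    (Q C : Matrix (Fin n) (Fin n) ℝ) (hQ : Q.PosDef)
    (q : Fin N → ℝ) (hq : ∀ i, 0 < q i) (c : Fin N → Fin n → ℝ)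
    (P : Matrix (Fin N) (Fin N) ℝ) (hPnn : ∀ i j, 0 ≤ P i j)
    (hPrs : ∀ i, ∑ j, P i j = 1)
    (hM : ∀ i, (Matrix.fromBlocks (q i • Q) (-C) (-Cᵀ) (q i • Q)).PosSemidef)
    (hP2 : specNorm P ≤ 1)
    (lam : ℝ) (hlam : 0 < lam ∧ lam < 1)
    (xstar : Fin N → (Fin n → ℝ) → (Fin n → ℝ))
    (hxstar : ∀ i, IsOptResp (X i) Q C (q i) (c i) (xstar i)) :
    ∀ z0 : Fin N × Fin n → ℝ, ∃ zbar : Fin N × Fin n → ℝ,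
      aggMap P ν xstar zbar = zbar ∧
      Tendsto
        (fun k => (fun z => (1 - lam) • z + lam • aggMap P ν xstar z)^[k] z0)
        atTop (𝓝 zbar) := by
  intro z0
  obtain ⟨hlam0, hlam1⟩ := hlam
  classical
  -- square root of Q
  set R : Matrix (Fin n) (Fin n) ℝ := (open scoped MatrixOrder in CFC.sqrt Q) with hRdef
  have hRR : R * R = Q := by
    open scoped MatrixOrder in exact CFC.sqrt_mul_sqrt_self Q hQ.posSemidef.nonneg
  have hRsym : Rᵀ = R := by
    have h := (open scoped MatrixOrder in (CFC.sqrt_nonneg Q).posSemidef.1)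
    rw [Matrix.IsHermitian] at h
    exact (Matrix.conjTranspose_eq_transpose_of_trivial _).symm.trans h
  have hdet : IsUnit R.det := by
    have hQdet : (0:ℝ) < Q.det := hQ.det_pos
    have h1 : R.det * R.det = Q.det := by rw [← Matrix.det_mul, hRR]
    have h2 : R.det ≠ 0 := by intro h0; rw [h0] at h1; simp at h1; linarith
    exact isUnit_iff_ne_zero.mpr h2
  have hRinvl : R⁻¹ * R = 1 := Matrix.nonsing_inv_mul R hdet
  have hRinvr : R * R⁻¹ = 1 := Matrix.mul_nonsing_inv R hdet
  -- conjugating matrices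
  set D : Matrix (Fin N × Fin n) (Fin N × Fin n) ℝ :=
    (1 : Matrix (Fin N) (Fin N) ℝ) ⊗ₖ R with hDdef
  set Dinv : Matrix (Fin N × Fin n) (Fin N × Fin n) ℝ :=
    (1 : Matrix (Fin N) (Fin N) ℝ) ⊗ₖ R⁻¹ with hDinvdef
  have hDinvD : Dinv * D = 1 := by
    rw [hDinvdef, hDdef, ← Matrix.mul_kronecker_mul, one_mul, hRinvl,
      Matrix.one_kronecker_one]
  have hDDinv : D * Dinv = 1 := by
    rw [hDinvdef, hDdef, ← Matrix.mul_kronecker_mul, one_mul, hRinvr,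
      Matrix.one_kronecker_one]
  have hVinv1 : ∀ w : Fin N × Fin n → ℝ, Dinv.mulVec (D.mulVec w) = w := by
    intro w; rw [Matrix.mulVec_mulVec, hDinvD, Matrix.one_mulVec]
  have hVinv2 : ∀ w : Fin N × Fin n → ℝ, D.mulVec (Dinv.mulVec w) = w := by
    intro w; rw [Matrix.mulVec_mulVec, hDDinv, Matrix.one_mulVec]
  set M : Matrix (Fin N × Fin n) (Fin N × Fin n) ℝ :=
    (P ^ ν) ⊗ₖ (1 : Matrix (Fin n) (Fin n) ℝ) with hMdef
  have hcomm : D * M = M * D := by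
    rw [hDdef, hMdef, ← Matrix.mul_kronecker_mul, ← Matrix.mul_kronecker_mul]
    rw [one_mul, mul_one, mul_one, one_mul]
  set T : (Fin N × Fin n → ℝ) → (Fin N × Fin n → ℝ) := aggMap P ν xstar with hTdef
  -- the weighted norm identity
  have hRdot : ∀ a : Fin n → ℝ, (R.mulVec a) ⬝ᵥ (R.mulVec a) = a ⬝ᵥ Q.mulVec a := by
    intro a
    calc (R.mulVec a) ⬝ᵥ (R.mulVec a) = ((R.mulVec a) ᵥ* R) ⬝ᵥ a :=
          Matrix.dotProduct_mulVec _ _ _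
      _ = (a ᵥ* (Rᵀ * R)) ⬝ᵥ a := by rw [Matrix.vecMul_mulVec]
      _ = (a ᵥ* Q) ⬝ᵥ a := by rw [hRsym, hRR]
      _ = a ⬝ᵥ Q.mulVec a := (Matrix.dotProduct_mulVec _ _ _).symm
  have hDblock : ∀ w : Fin N × Fin n → ℝ,
      (D.mulVec w) ⬝ᵥ (D.mulVec w)
        = ∑ i : Fin N, ((fun j => w (i,j)) ⬝ᵥ Q.mulVec (fun j => w (i,j))) := by
    intro w
    rw [dot_prod_split]
    refine Finset.sum_congr rfl fun i _ => ?_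
    have e : (fun j => (D.mulVec w) (i,j)) = R.mulVec (fun l => w (i,l)) :=
      funext fun j => one_kron_mulVec_apply R w (i,j)
    rw [e, hRdot]
  -- nonexpansiveness of T in the weighted (squared) norm
  have hTnon : ∀ u v : Fin N × Fin n → ℝ,
      (D.mulVec (T u - T v)) ⬝ᵥ (D.mulVec (T u - T v))
        ≤ (D.mulVec (u - v)) ⬝ᵥ (D.mulVec (u - v)) := by
    intro u v
    have hTdiff : T u - T v = M.mulVec (extMap xstar u - extMap xstar v) := by
      rw [Matrix.mulVec_sub]; rfl
    rw [hTdiff, Matrix.mulVec_mulVec, hcomm, ← Matrix.mulVec_mulVec]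
    set w : Fin N × Fin n → ℝ := D.mulVec (extMap xstar u - extMap xstar v) with hwdef
    have step1 : (M.mulVec w) ⬝ᵥ (M.mulVec w) ≤ w ⬝ᵥ w := by
      rw [hMdef]
      exact kron_one_nonexp _ (fun x => specNorm_pow_mulVec_le P hP2 ν x) w
    refine le_trans step1 ?_
    rw [hwdef, hDblock, hDblock]
    refine Finset.sum_le_sum fun i _ => ?_
    have e1 : (fun j => (extMap xstar u - extMap xstar v) (i,j))
        = xstar i (fun j => u (i,j)) - xstar i (fun j => v (i,j)) := rfl
    have e2 : (fun j => (u - v) (i,j))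
        = (fun j => u (i,j)) - (fun j => v (i,j)) := rfl
    rw [e1, e2]
    exact xstar_Q_nonexp (hXconv i) hQ.posSemidef (hq i) (hxstar i) (hM i) _ _
  -- move to Euclidean space via conjugation
  set E := EuclideanSpace ℝ (Fin N × Fin n) with hEdef
  have enorm : ∀ x : E, ‖x‖^2 = (WithLp.equiv 2 (Fin N × Fin n → ℝ) x)
      ⬝ᵥ (WithLp.equiv 2 (Fin N × Fin n → ℝ) x) := by
    intro x
    rw [EuclideanSpace.norm_eq, Real.sq_sqrt (by positivity)]
    simp [dotProduct, sq]
  set Tt : E → E := fun y =>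
    (WithLp.equiv 2 (Fin N × Fin n → ℝ)).symm
      (D.mulVec (T (Dinv.mulVec (WithLp.equiv 2 (Fin N × Fin n → ℝ) y)))) with hTtdef
  have hTtsub : ∀ a b : E, WithLp.equiv 2 (Fin N × Fin n → ℝ) (Tt a - Tt b)
      = D.mulVec (T (Dinv.mulVec (WithLp.equiv 2 _ a)) - T (Dinv.mulVec (WithLp.equiv 2 _ b))) := by
    intro a b
    rw [Matrix.mulVec_sub]
    rfl
  have hTtnon : ∀ a b : E, ‖Tt a - Tt b‖ ≤ ‖a - b‖ := by
    intro a b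
    have hsq : ‖Tt a - Tt b‖^2 ≤ ‖a - b‖^2 := by
      rw [enorm, enorm, hTtsub]
      set u := Dinv.mulVec (WithLp.equiv 2 (Fin N × Fin n → ℝ) a) with hu
      set v := Dinv.mulVec (WithLp.equiv 2 (Fin N × Fin n → ℝ) b) with hv
      refine le_trans (hTnon u v) ?_
      have e : D.mulVec (u - v) = WithLp.equiv 2 (Fin N × Fin n → ℝ) (a - b) := by
        rw [hu, hv, ← Matrix.mulVec_sub, Matrix.mulVec_mulVec, hDDinv, Matrix.one_mulVec]
        rfl
      rw [e]
    have h1 := Real.sqrt_le_sqrt hsq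
    rwa [Real.sqrt_sq (norm_nonneg _), Real.sqrt_sq (norm_nonneg _)] at h1
  -- boundedness of the range of Tt
  have hrad : ∀ i : Fin N, ∃ ri : ℝ, ∀ x ∈ X i, ‖x‖ ≤ ri := by
    intro i
    obtain ⟨ri, hri⟩ := (hXcpt i).isBounded.subset_closedBall 0
    exact ⟨ri, fun x hx => by simpa [dist_eq_norm] using hri hx⟩
  choose ri hri using hrad
  set r : ℝ := ∑ i, |ri i| with hrdef
  have hext : ∀ (z : Fin N × Fin n → ℝ) (p : Fin N × Fin n),
      |extMap xstar z p| ≤ r := by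
    intro z p
    have h1 : |extMap xstar z p| ≤ ‖xstar p.1 (fun j => z (p.1, j))‖ := by
      have := norm_le_pi_norm (xstar p.1 (fun j => z (p.1, j))) p.2
      simpa [extMap, Real.norm_eq_abs] using this
    have h2 : ‖xstar p.1 (fun j => z (p.1, j))‖ ≤ ri p.1 :=
      hri p.1 _ (hxstar p.1 (fun j => z (p.1, j))).1
    have h3 : ri p.1 ≤ r := by
      rw [hrdef]
      calc ri p.1 ≤ |ri p.1| := le_abs_self _
        _ ≤ ∑ i, |ri i| := Finset.single_le_sum (fun i _ => abs_nonneg (ri i))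
              (Finset.mem_univ p.1)
    linarith
  set G : Matrix (Fin N × Fin n) (Fin N × Fin n) ℝ := D * M with hGdef
  set Cb : ℝ := Real.sqrt (∑ p : Fin N × Fin n, (∑ q : Fin N × Fin n, |G p q| * r)^2)
    with hCbdef
  have hCb : ∀ y : E, ‖Tt y‖ ≤ Cb := by
    intro y
    have hform : WithLp.equiv 2 (Fin N × Fin n → ℝ) (Tt y)
        = G.mulVec (extMap xstar (Dinv.mulVec (WithLp.equiv 2 _ y))) := by
      rw [hGdef, ← Matrix.mulVec_mulVec]
      rfl
    set e : Fin N × Fin n → ℝ := extMap xstar (Dinv.mulVec (WithLp.equiv 2 _ y)) with hedef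
    have hcoord : ∀ p, |(G.mulVec e) p| ≤ ∑ q, |G p q| * r := by
      intro p
      calc |(G.mulVec e) p| = |∑ q, G p q * e q| := rfl
        _ ≤ ∑ q, |G p q * e q| := Finset.abs_sum_le_sum_abs _ _
        _ ≤ ∑ q, |G p q| * r := by
            refine Finset.sum_le_sum fun q _ => ?_
            rw [abs_mul]
            exact mul_le_mul_of_nonneg_left (hext _ q) (abs_nonneg _)
    have hsq : ‖Tt y‖^2 ≤ ∑ p : Fin N × Fin n, (∑ q : Fin N × Fin n, |G p q| * r)^2 := by
      rw [enorm, hform]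
      have : (G.mulVec e) ⬝ᵥ (G.mulVec e) = ∑ p, ((G.mulVec e) p)^2 := by
        simp [dotProduct, sq]
      rw [this]
      refine Finset.sum_le_sum fun p _ => ?_
      have := hcoord p
      calc ((G.mulVec e) p)^2 = |(G.mulVec e) p|^2 := (sq_abs _).symm
        _ ≤ (∑ q, |G p q| * r)^2 := by
            have h0 : (0:ℝ) ≤ |(G.mulVec e) p| := abs_nonneg _
            nlinarith
    calc ‖Tt y‖ = Real.sqrt (‖Tt y‖^2) := (Real.sqrt_sq (norm_nonneg _)).symm
      _ ≤ Cb := by rw [hCbdef]; exact Real.sqrt_le_sqrt hsq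
  -- apply the Krasnoselskij–Mann convergence theorem in E
  obtain ⟨ybar, hyfix, hytend⟩ := km_main (E := E) Tt hTtnon Cb hCb lam hlam0 hlam1
    ((WithLp.equiv 2 (Fin N × Fin n → ℝ)).symm (D.mulVec z0))
  set zbar : Fin N × Fin n → ℝ := Dinv.mulVec (WithLp.equiv 2 _ ybar) with hzbardef
  have hfix : T zbar = zbar := by
    have h1 : D.mulVec (T zbar) = WithLp.equiv 2 (Fin N × Fin n → ℝ) (Tt ybar) := rfl
    rw [hyfix] at h1
    have := congrArg Dinv.mulVec h1
    rwa [hVinv1] at this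
  refine ⟨zbar, hfix, ?_⟩
  -- conjugate the iteration
  set S : (Fin N × Fin n → ℝ) → (Fin N × Fin n → ℝ) :=
    fun z => (1 - lam) • z + lam • aggMap P ν xstar z with hSdef
  set St : E → E := fun z => (1 - lam) • z + lam • Tt z with hStdef
  have hconj : ∀ y : E, S (Dinv.mulVec (WithLp.equiv 2 _ y))
      = Dinv.mulVec (WithLp.equiv 2 (Fin N × Fin n → ℝ) (St y)) := by
    intro y
    have h1 : WithLp.equiv 2 (Fin N × Fin n → ℝ) (St y)
        = (1 - lam) • (WithLp.equiv 2 (Fin N × Fin n → ℝ) y)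
          + lam • (D.mulVec (T (Dinv.mulVec (WithLp.equiv 2 _ y)))) := rfl
    rw [h1, Matrix.mulVec_add, Matrix.mulVec_smul, Matrix.mulVec_smul, hVinv1]
  have hiter : ∀ k : ℕ, S^[k] z0
      = Dinv.mulVec (WithLp.equiv 2 (Fin N × Fin n → ℝ)
          (St^[k] ((WithLp.equiv 2 (Fin N × Fin n → ℝ)).symm (D.mulVec z0)))) := by
    intro k
    induction k with
    | zero =>
      simp only [Function.iterate_zero, id_eq]
      rw [show WithLp.equiv 2 (Fin N × Fin n → ℝ)
        ((WithLp.equiv 2 (Fin N × Fin n → ℝ)).symm (D.mulVec z0)) = D.mulVec z0 from rfl]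
      rw [hVinv1]
    | succ k ih =>
      rw [Function.iterate_succ_apply', Function.iterate_succ_apply', ih, hconj]
  -- transfer the limit
  have hLlin : Continuous fun y : E =>
      Dinv.mulVec (WithLp.equiv 2 (Fin N × Fin n → ℝ) y) := by
    have : (fun y : E => Dinv.mulVec (WithLp.equiv 2 (Fin N × Fin n → ℝ) y))
        = (Dinv.mulVecLin.comp (WithLp.linearEquiv 2 ℝ (Fin N × Fin n → ℝ)).toLinearMap : E →ₗ[ℝ] (Fin N × Fin n → ℝ)) := rfl
    rw [this]
    exact LinearMap.continuous_of_finiteDimensional _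
  have hfinal : Tendsto (fun k => S^[k] z0) atTop (𝓝 zbar) := by
    have h2 : Tendsto (fun k =>
        Dinv.mulVec (WithLp.equiv 2 (Fin N × Fin n → ℝ)
          (St^[k] ((WithLp.equiv 2 (Fin N × Fin n → ℝ)).symm (D.mulVec z0)))))
        atTop (𝓝 zbar) := by
      rw [hzbardef]
      exact (hLlin.tendsto ybar).comp hytend
    have e : (fun k => S^[k] z0) = fun k =>
        Dinv.mulVec (WithLp.equiv 2 (Fin N × Fin n → ℝ)
          (St^[k] ((WithLp.equiv 2 (Fin N × Fin n → ℝ)).symm (D.mulVec z0)))) :=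
      funext hiter
    rw [e]
    exact h2
  exact hfinal
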